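/- Let q₂, q₁, q₀ ∈ ℝ with q₂² ≠ 1, and let e₁, e₂, e₃, t, U ∈ ℝ satisfy the three first integrals: (e₁² − e₂)(q₂² − 1)/2 − e₁ q₂ q₁ + (2 q₂ q₀ + q₁² + 2t)/2 = 0, (e₃ − e₁ e₂)(q₂² − 1)/2 + e₂ q₂ q₁ − q₁ q₀ − q₂ − 1 = 0, and e₁ e₃ (q₂² − 1)/2 − e₃ q₂ q₁ + q₀²/2 + U − e₁ q₂ + 2 q₁ = 0. Then the polynomial (q₂²−1)/2·x⁴ − q₂q₁ x³ + (2q₂q₀+q₁²+2t)/2·x² − (q₁q₀+q₂+1)x + q₀²/2 + U − e₁q₂ + 2q₁ equals (x³ − e₁x² + e₂x − e₃)·((q₂²−1)/2·(x+e₁) − q₂q₁) as polynomials in x. -/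
import Mathlib


/-- The polynomial division identity (2.13): vanishing of the three first
integrals `I₂, I₁, I₀` makes the quartic divisible by `x³ - e₁x² + e₂x - e₃`
with the stated quotient. -/
theorem stmt_10 (q₂ q₁ q₀ e₁ e₂ e₃ t U : ℝ) (h : q₂ ^ 2 ≠ 1)
    (I2 : (e₁ ^ 2 - e₂) * (q₂ ^ 2 - 1) / 2 - e₁ * q₂ * q₁
      + (2 * q₂ * q₀ + q₁ ^ 2 + 2 * t) / 2 = 0)
    (I1 : (e₃ - e₁ * e₂) * (q₂ ^ 2 - 1) / 2 + e₂ * q₂ * q₁ - q₁ * q₀ - q₂ - 1 = 0)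
    (I0 : e₁ * e₃ * (q₂ ^ 2 - 1) / 2 - e₃ * q₂ * q₁ + q₀ ^ 2 / 2
      + U - e₁ * q₂ + 2 * q₁ = 0) :
    ∀ x : ℝ,
      (q₂ ^ 2 - 1) / 2 * x ^ 4 - q₂ * q₁ * x ^ 3
        + (2 * q₂ * q₀ + q₁ ^ 2 + 2 * t) / 2 * x ^ 2
        - (q₁ * q₀ + q₂ + 1) * x + q₀ ^ 2 / 2 + U - e₁ * q₂ + 2 * q₁
      = (x ^ 3 - e₁ * x ^ 2 + e₂ * x - e₃)
        * ((q₂ ^ 2 - 1) / 2 * (x + e₁) - q₂ * q₁) := by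
  intro x
  linear_combination (x^2) * I2 + x * I1 + I0
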